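/- arXiv:math/0611737 — 2 statements merged into one kernel-verified Lean document; each statement's English description precedes it below -/
import Mathlib

section
/- In $N_r$ with $4\le r\le 7$, the elements $\alpha \in K_r^\perp$ with $(\alpha,\alpha) = -2$ form a root system of rank $r$ in $K_r^\perp \otimes \mathbb{R}$ (with the negative of the given form as positive definite scalar product); in particular, the elements $\beta_1=-\ell_1+\ell_2,\ldots,\beta_{r-1}=-\ell_{r-1}+\ell_r$, $\beta_r=-\ell_0+\ell_1+\ell_2+\ell_3$ all lie in $K_r^\perp$ and satisfy $(\beta_i,\beta_i)=-2$. -/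
def Nform (r : ℕ) (x y : Fin (r + 1) → ℤ) : ℤ :=
  ∑ i : Fin (r + 1), if i = 0 then x i * y i else -(x i * y i)

def Kvec (r : ℕ) : Fin (r + 1) → ℤ := fun i => if i = 0 then -3 else 1

/-- The simple roots `β_1 = -ℓ_1+ℓ_2, …, β_{r-1} = -ℓ_{r-1}+ℓ_r`,
`β_r = -ℓ_0+ℓ_1+ℓ_2+ℓ_3` (indexed by `j : Fin r`, with `β_{j+1} = beta r j`). -/
def beta (r : ℕ) (j : Fin r) : Fin (r + 1) → ℤ := fun i =>
  if (j : ℕ) + 1 < r then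
    (if (i : ℕ) = (j : ℕ) + 1 then -1 else if (i : ℕ) = (j : ℕ) + 2 then 1 else 0)
  else
    (if (i : ℕ) = 0 then -1 else if (i : ℕ) ≤ 3 then 1 else 0)

/-- The set of roots: `α ∈ K_r^⊥` with `(α,α) = -2`. -/
def RootSet (r : ℕ) : Set (Fin (r + 1) → ℤ) :=
  {a | Nform r a (Kvec r) = 0 ∧ Nform r a a = -2}

lemma Nform_comm (r : ℕ) (x y : Fin (r + 1) → ℤ) : Nform r x y = Nform r y x := by
  unfold Nform
  refine Finset.sum_congr rfl fun i _ => ?_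
  split <;> ring

lemma Nform_add_left (r : ℕ) (x y z : Fin (r + 1) → ℤ) :
    Nform r (x + y) z = Nform r x z + Nform r y z := by
  unfold Nform
  rw [← Finset.sum_add_distrib]
  refine Finset.sum_congr rfl fun i _ => ?_
  simp only [Pi.add_apply]
  split <;> ring

lemma Nform_smul_left (r : ℕ) (c : ℤ) (x y : Fin (r + 1) → ℤ) :
    Nform r (c • x) y = c * Nform r x y := by
  unfold Nform
  rw [Finset.mul_sum]
  refine Finset.sum_congr rfl fun i _ => ?_
  simp only [Pi.smul_apply, smul_eq_mul]
  split <;> ring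

lemma Nform_split (r : ℕ) (x y : Fin (r + 1) → ℤ) :
    Nform r x y = x 0 * y 0 -
      ∑ i ∈ (Finset.univ : Finset (Fin (r + 1))).erase 0, x i * y i := by
  unfold Nform
  rw [← Finset.add_sum_erase _ _ (Finset.mem_univ (0 : Fin (r + 1))), if_pos rfl,
    sub_eq_add_neg, ← Finset.sum_neg_distrib]
  congr 1
  refine Finset.sum_congr rfl fun i hi => ?_
  rw [if_neg (Finset.mem_erase.mp hi).1]

lemma rootset_bound (r : ℕ) (h7 : r ≤ 7) (a : Fin (r + 1) → ℤ) (ha : a ∈ RootSet r) :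
    ∀ i, a i ∈ Set.Icc (-3 : ℤ) 3 := by
  obtain ⟨h1, h2⟩ := ha
  set s := (Finset.univ : Finset (Fin (r + 1))).erase 0 with hs
  have hcard : s.card = r := by
    rw [hs, Finset.card_erase_of_mem (Finset.mem_univ 0), Finset.card_univ, Fintype.card_fin]
    omega
  rw [Nform_split] at h1 h2
  have hK0 : Kvec r 0 = -3 := rfl
  have hB : ∑ i ∈ s, a i = -(3 * a 0) := by
    have hK : ∀ i ∈ s, a i * Kvec r i = a i := fun i hi => by
      simp [Kvec, (Finset.mem_erase.mp hi).1]
    rw [Finset.sum_congr rfl hK, hK0] at h1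
    linarith
  have hA : ∑ i ∈ s, a i ^ 2 = a 0 ^ 2 + 2 := by
    have : ∀ i ∈ s, a i * a i = a i ^ 2 := fun i _ => (sq (a i)).symm
    rw [Finset.sum_congr rfl this] at h2
    nlinarith [h2]
  have hC := Finset.sum_mul_sq_le_sq_mul_sq s a (fun _ => 1)
  simp only [mul_one, one_pow, Finset.sum_const, nsmul_eq_mul, smul_eq_mul] at hC
  rw [hB, hA, hcard] at hC
  have hrQ : (r : ℤ) ≤ 7 := by exact_mod_cast h7
  have hr0 : (0:ℤ) ≤ (r:ℤ) := Int.ofNat_nonneg r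
  have ha0 : a 0 ^ 2 ≤ 7 := by
    nlinarith [sq_nonneg (a 0), mul_le_mul_of_nonneg_left hrQ (by positivity : (0:ℤ) ≤ a 0 ^ 2 + 2)]
  intro i
  by_cases hi : i = 0
  · subst hi
    constructor <;> nlinarith
  · have hi' : a i ^ 2 ≤ ∑ j ∈ s, a j ^ 2 :=
      Finset.single_le_sum (f := fun j => a j ^ 2) (fun j _ => sq_nonneg _)
        (Finset.mem_erase.mpr ⟨hi, Finset.mem_univ i⟩)
    rw [hA] at hi'
    constructor <;> nlinarith

/-- The elements `α ∈ K_r^⊥` with `(α,α) = -2` form a root system of rank `r`: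
the set of roots is finite, stable under the reflections `s_α(b) = b + (α,b)α`
(note `(α,α) = -2`), contains the `β_j`, and the `β_j` are `r` linearly
independent simple roots. -/
theorem roots_form_root_system (r : ℕ) (h4 : 4 ≤ r) (h7 : r ≤ 7) :
    (RootSet r).Finite ∧
    (∀ a ∈ RootSet r, ∀ b ∈ RootSet r, b + Nform r a b • a ∈ RootSet r) ∧
    (∀ j : Fin r, beta r j ∈ RootSet r ∧
      Nform r (beta r j) (Kvec r) = 0 ∧ Nform r (beta r j) (beta r j) = -2) ∧
    LinearIndependent ℤ (beta r) := by
  refine ⟨?_, ?_, ?_, ?_⟩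
  · refine Set.Finite.subset (Set.Finite.pi fun _ : Fin (r + 1) =>
      Set.finite_Icc (-3 : ℤ) 3) ?_
    intro a ha i _
    exact rootset_bound r h7 a ha i
  · rintro a ⟨ha1, ha2⟩ b ⟨hb1, hb2⟩
    set n := Nform r a b with hn
    have hba : Nform r b a = n := by rw [hn, Nform_comm]
    constructor
    · rw [Nform_add_left, Nform_smul_left, ha1, hb1]
      ring
    · rw [Nform_add_left, Nform_smul_left, Nform_comm r b, Nform_add_left, Nform_smul_left,
        Nform_comm r a (b + n • a), Nform_add_left, Nform_smul_left, hb2, ha2, hba, ← hn]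
      ring
  · interval_cases r <;>
      (simp only [RootSet, Set.mem_setOf_eq]; decide)
  · interval_cases r
    · rw [Fintype.linearIndependent_iff]
      intro c hc
      have h0 := congrFun hc 0; have h1 := congrFun hc 1; have h2 := congrFun hc 2
      have h3 := congrFun hc 3; have h4 := congrFun hc 4
      simp only [Finset.sum_apply, Pi.smul_apply, Pi.zero_apply, smul_eq_mul,
        Fin.sum_univ_four, beta,
        show ((0:Fin 5):ℕ) = 0 from rfl, show ((1:Fin 5):ℕ) = 1 from rfl,
        show ((2:Fin 5):ℕ) = 2 from rfl, show ((3:Fin 5):ℕ) = 3 from rfl,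
        show ((4:Fin 5):ℕ) = 4 from rfl,
        show ((0:Fin 4):ℕ) = 0 from rfl, show ((1:Fin 4):ℕ) = 1 from rfl,
        show ((2:Fin 4):ℕ) = 2 from rfl, show ((3:Fin 4):ℕ) = 3 from rfl]
        at h0 h1 h2 h3 h4
      norm_num at h0 h1 h2 h3 h4
      intro j
      fin_cases j
      exacts [show c 0 = 0 by omega, show c 1 = 0 by omega,
        show c 2 = 0 by omega, show c 3 = 0 by omega]
    · rw [Fintype.linearIndependent_iff]
      intro c hc
      have h0 := congrFun hc 0; have h1 := congrFun hc 1; have h2 := congrFun hc 2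
      have h3 := congrFun hc 3; have h4 := congrFun hc 4; have h5 := congrFun hc 5
      simp only [Finset.sum_apply, Pi.smul_apply, Pi.zero_apply, smul_eq_mul,
        Fin.sum_univ_five, beta,
        show ((0:Fin 6):ℕ) = 0 from rfl, show ((1:Fin 6):ℕ) = 1 from rfl,
        show ((2:Fin 6):ℕ) = 2 from rfl, show ((3:Fin 6):ℕ) = 3 from rfl,
        show ((4:Fin 6):ℕ) = 4 from rfl, show ((5:Fin 6):ℕ) = 5 from rfl,
        show ((0:Fin 5):ℕ) = 0 from rfl, show ((1:Fin 5):ℕ) = 1 from rfl,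
        show ((2:Fin 5):ℕ) = 2 from rfl, show ((3:Fin 5):ℕ) = 3 from rfl,
        show ((4:Fin 5):ℕ) = 4 from rfl]
        at h0 h1 h2 h3 h4 h5
      norm_num at h0 h1 h2 h3 h4 h5
      intro j
      fin_cases j
      exacts [show c 0 = 0 by omega, show c 1 = 0 by omega, show c 2 = 0 by omega,
        show c 3 = 0 by omega, show c 4 = 0 by omega]
    · rw [Fintype.linearIndependent_iff]
      intro c hc
      have h0 := congrFun hc 0; have h1 := congrFun hc 1; have h2 := congrFun hc 2
      have h3 := congrFun hc 3; have h4 := congrFun hc 4; have h5 := congrFun hc 5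
      have h6 := congrFun hc 6
      simp only [Finset.sum_apply, Pi.smul_apply, Pi.zero_apply, smul_eq_mul,
        Fin.sum_univ_six, beta,
        show ((0:Fin 7):ℕ) = 0 from rfl, show ((1:Fin 7):ℕ) = 1 from rfl,
        show ((2:Fin 7):ℕ) = 2 from rfl, show ((3:Fin 7):ℕ) = 3 from rfl,
        show ((4:Fin 7):ℕ) = 4 from rfl, show ((5:Fin 7):ℕ) = 5 from rfl,
        show ((6:Fin 7):ℕ) = 6 from rfl,
        show ((0:Fin 6):ℕ) = 0 from rfl, show ((1:Fin 6):ℕ) = 1 from rfl,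
        show ((2:Fin 6):ℕ) = 2 from rfl, show ((3:Fin 6):ℕ) = 3 from rfl,
        show ((4:Fin 6):ℕ) = 4 from rfl, show ((5:Fin 6):ℕ) = 5 from rfl]
        at h0 h1 h2 h3 h4 h5 h6
      norm_num at h0 h1 h2 h3 h4 h5 h6
      intro j
      fin_cases j
      exacts [show c 0 = 0 by omega, show c 1 = 0 by omega, show c 2 = 0 by omega,
        show c 3 = 0 by omega, show c 4 = 0 by omega, show c 5 = 0 by omega]
    · rw [Fintype.linearIndependent_iff]
      intro c hc
      have h0 := congrFun hc 0; have h1 := congrFun hc 1; have h2 := congrFun hc 2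
      have h3 := congrFun hc 3; have h4 := congrFun hc 4; have h5 := congrFun hc 5
      have h6 := congrFun hc 6; have h7 := congrFun hc 7
      simp only [Finset.sum_apply, Pi.smul_apply, Pi.zero_apply, smul_eq_mul,
        Fin.sum_univ_seven, beta,
        show ((0:Fin 8):ℕ) = 0 from rfl, show ((1:Fin 8):ℕ) = 1 from rfl,
        show ((2:Fin 8):ℕ) = 2 from rfl, show ((3:Fin 8):ℕ) = 3 from rfl,
        show ((4:Fin 8):ℕ) = 4 from rfl, show ((5:Fin 8):ℕ) = 5 from rfl,
        show ((6:Fin 8):ℕ) = 6 from rfl, show ((7:Fin 8):ℕ) = 7 from rfl,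
        show ((0:Fin 7):ℕ) = 0 from rfl, show ((1:Fin 7):ℕ) = 1 from rfl,
        show ((2:Fin 7):ℕ) = 2 from rfl, show ((3:Fin 7):ℕ) = 3 from rfl,
        show ((4:Fin 7):ℕ) = 4 from rfl, show ((5:Fin 7):ℕ) = 5 from rfl,
        show ((6:Fin 7):ℕ) = 6 from rfl]
        at h0 h1 h2 h3 h4 h5 h6 h7
      norm_num at h0 h1 h2 h3 h4 h5 h6 h7
      intro j
      fin_cases j
      exacts [show c 0 = 0 by omega, show c 1 = 0 by omega, show c 2 = 0 by omega,
        show c 3 = 0 by omega, show c 4 = 0 by omega, show c 5 = 0 by omega,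
        show c 6 = 0 by omega]
end

section
/- In the lattice $N_r$ with $4\le r\le 7$, the conic bundle classes, i.e. elements $c\in N_r$ with $(c,c)=0$ and $(c,K_r)=-2$, include $c=\ell_0-\ell_1$; moreover for any conic bundle class $x$ there exists a conic bundle class $y$ with $(x,y)=1$. -/
set_option maxHeartbeats 1000000

/-- A conic bundle class: `(c,c) = 0` and `(c,K_r) = -2`. -/
def ConicClass (r : ℕ) (c : Fin (r + 1) → ℤ) : Prop :=
  Nform r c c = 0 ∧ Nform r c (Kvec r) = -2

/- ### Auxiliary lemmas -/

/-- The indicator function with value `c` at `j`. -/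
def sgl {n : ℕ} (j : Fin n) (c : ℤ) : Fin n → ℤ := fun t => if t = j then c else 0

lemma sgl_same {n : ℕ} (j : Fin n) (c : ℤ) : sgl j c j = c := if_pos rfl

lemma sgl_ne {n : ℕ} {t j : Fin n} (h : t ≠ j) (c : ℤ) : sgl j c t = 0 := if_neg h


lemma Nform_sub_right (r : ℕ) (x y z : Fin (r + 1) → ℤ) :
    Nform r x (fun i => y i - z i) = Nform r x y - Nform r x z := by
  unfold Nform
  rw [← Finset.sum_sub_distrib]
  refine Finset.sum_congr rfl fun i _ => ?_
  split <;> ring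

lemma Nform_add_right (r : ℕ) (x y z : Fin (r + 1) → ℤ) :
    Nform r x (fun i => y i + z i) = Nform r x y + Nform r x z := by
  unfold Nform
  rw [← Finset.sum_add_distrib]
  refine Finset.sum_congr rfl fun i _ => ?_
  split <;> ring

lemma Nform_smul_right (r : ℕ) (x y : Fin (r + 1) → ℤ) (c : ℤ) :
    Nform r x (fun i => c * y i) = c * Nform r x y := by
  unfold Nform
  rw [Finset.mul_sum]
  refine Finset.sum_congr rfl fun i _ => ?_
  split <;> ring

lemma Nform_single_right (r : ℕ) (x : Fin (r + 1) → ℤ) (j : Fin (r + 1)) (c : ℤ) :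
    Nform r x (sgl j c) = if j = 0 then x j * c else -(x j * c) := by
  unfold Nform
  rw [Finset.sum_eq_single j]
  · rw [sgl_same]
  · intro i _ hij
    rw [sgl_ne hij]
    split <;> ring
  · intro h; exact absurd (Finset.mem_univ j) h

/-- Adding `ε` times a root `e` with `(x,e) = ε`, `ε² = 1`, produces the desired `y`. -/
lemma key (r : ℕ) (x e : Fin (r + 1) → ℤ) (hx : ConicClass r x)
    (hee : Nform r e e = -2) (heK : Nform r e (Kvec r) = 0)
    (ε : ℤ) (hε : ε * ε = 1) (hxe : Nform r x e = ε) :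
    ∃ y, ConicClass r y ∧ Nform r x y = 1 := by
  obtain ⟨hxx, hxK⟩ := hx
  refine ⟨fun i => x i + ε * e i, ⟨?_, ?_⟩, ?_⟩
  · have h1 : Nform r x (fun i => x i + ε * e i) = 1 := by
      rw [Nform_add_right, Nform_smul_right, hxx, hxe]; linarith [hε]
    have h2 : Nform r e (fun i => x i + ε * e i) = -ε := by
      rw [Nform_add_right, Nform_smul_right, hee, Nform_comm r e x, hxe]; ring
    rw [show Nform r (fun i => x i + ε * e i) (fun i => x i + ε * e i)
        = Nform r x (fun i => x i + ε * e i) + ε * Nform r e (fun i => x i + ε * e i) from by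
      rw [Nform_comm r (fun i => x i + ε * e i) _, Nform_add_right, Nform_smul_right]
      rw [Nform_comm r _ x, Nform_comm r _ e]]
    rw [h1, h2]; linarith [hε]
  · rw [Nform_comm, show (fun i => x i + ε * e i) = (fun i => x i + ε * e i) from rfl]
    rw [Nform_add_right, Nform_smul_right, Nform_comm r (Kvec r) x, hxK,
      Nform_comm r (Kvec r) e, heK]
    ring
  · rw [Nform_add_right, Nform_smul_right, hxx, hxe]; linarith [hε]

/-- Root `ℓ_i - ℓ_j` move: if `x i = x j + 1` for distinct nonzero `i j`. -/
lemma root1_case (r : ℕ) (x : Fin (r + 1) → ℤ) (hx : ConicClass r x)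
    (i j : Fin (r + 1)) (hi : i ≠ 0) (hj : j ≠ 0) (hij : i ≠ j)
    (hval : x i = x j + 1) :
    ∃ y, ConicClass r y ∧ Nform r x y = 1 := by
  set e : Fin (r + 1) → ℤ := fun k => sgl i (1 : ℤ) k - sgl j (1 : ℤ) k with he
  have hform : ∀ z : Fin (r + 1) → ℤ, Nform r z e = z j - z i := by
    intro z
    have : Nform r z e = Nform r z (sgl i 1) - Nform r z (sgl j 1) :=
      Nform_sub_right r z (sgl i 1) (sgl j 1)
    rw [this, Nform_single_right, Nform_single_right, if_neg hi, if_neg hj]; ring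
  have hei : e i = 1 := by
    simp [he, sgl_same, sgl_ne hij]
  have hej : e j = -1 := by
    simp [he, sgl_same, sgl_ne (Ne.symm hij)]
  refine key r x e hx ?_ ?_ (-1) (by ring) ?_
  · rw [hform e, hei, hej]; ring
  · rw [Nform_comm, hform (Kvec r)]
    simp [Kvec, if_neg hi, if_neg hj]
  · rw [hform x, hval]; ring

/-- Root `ℓ_0 - ℓ_i - ℓ_j - ℓ_k` move: if `x 0 + x i + x j + x k = -1`. -/
lemma root2_case (r : ℕ) (x : Fin (r + 1) → ℤ) (hx : ConicClass r x)
    (i j k : Fin (r + 1)) (hi : i ≠ 0) (hj : j ≠ 0) (hk : k ≠ 0)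
    (hij : i ≠ j) (hik : i ≠ k) (hjk : j ≠ k)
    (hval : x 0 + x i + x j + x k = -1) :
    ∃ y, ConicClass r y ∧ Nform r x y = 1 := by
  set e : Fin (r + 1) → ℤ :=
    fun t => sgl (0 : Fin (r + 1)) (1 : ℤ) t - sgl i (1 : ℤ) t
      - sgl j (1 : ℤ) t - sgl k (1 : ℤ) t with he
  have hform : ∀ z : Fin (r + 1) → ℤ, Nform r z e = z 0 + z i + z j + z k := by
    intro z
    have h1 : Nform r z e =
        Nform r z (fun t => sgl (0 : Fin (r + 1)) (1 : ℤ) t - sgl i (1 : ℤ) t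
          - sgl j (1 : ℤ) t) - Nform r z (sgl k 1) :=
      Nform_sub_right r z _ (sgl k 1)
    have h2 : Nform r z (fun t => sgl (0 : Fin (r + 1)) (1 : ℤ) t - sgl i (1 : ℤ) t
          - sgl j (1 : ℤ) t) =
        Nform r z (fun t => sgl (0 : Fin (r + 1)) (1 : ℤ) t - sgl i (1 : ℤ) t)
          - Nform r z (sgl j 1) :=
      Nform_sub_right r z _ (sgl j 1)
    have h3 : Nform r z (fun t => sgl (0 : Fin (r + 1)) (1 : ℤ) t - sgl i (1 : ℤ) t) =
        Nform r z (sgl (0 : Fin (r + 1)) 1) - Nform r z (sgl i 1) :=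
      Nform_sub_right r z _ (sgl i 1)
    rw [h1, h2, h3, Nform_single_right, Nform_single_right, Nform_single_right,
      Nform_single_right, if_pos rfl, if_neg hi, if_neg hj, if_neg hk]
    ring
  have he0 : e 0 = 1 := by
    simp [he, sgl_same, sgl_ne (Ne.symm hi), sgl_ne (Ne.symm hj),
      sgl_ne (Ne.symm hk)]
  have hei : e i = -1 := by
    simp [he, sgl_same, sgl_ne hi, sgl_ne hij,
      sgl_ne hik]
  have hejj : e j = -1 := by
    simp [he, sgl_same, sgl_ne hj, sgl_ne (Ne.symm hij),
      sgl_ne hjk]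
  have hek : e k = -1 := by
    simp [he, sgl_same, sgl_ne hk, sgl_ne (Ne.symm hik),
      sgl_ne (Ne.symm hjk)]
  refine key r x e hx ?_ ?_ (-1) (by ring) ?_
  · rw [hform e, he0, hei, hejj, hek]; ring
  · rw [Nform_comm, hform (Kvec r)]
    simp [Kvec, if_neg hi, if_neg hj, if_neg hk]
  · rw [hform x, hval]

lemma sum_quad {n : ℕ} (s : Finset (Fin n)) (f : Fin n → ℤ) (p q : ℤ) :
    ∑ i ∈ s, (f i + p) * (f i + q)
      = (∑ i ∈ s, f i * f i) + (p + q) * (∑ i ∈ s, f i) + (s.card : ℤ) * (p * q) := by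
  have h : ∀ i ∈ s, (f i + p) * (f i + q) = f i * f i + (p + q) * f i + p * q :=
    fun i _ => by ring
  rw [Finset.sum_congr rfl h, Finset.sum_add_distrib, Finset.sum_add_distrib,
    ← Finset.mul_sum, Finset.sum_const, nsmul_eq_mul]

lemma consec_nonneg (m : ℤ) : 0 ≤ m * (m + 1) := by
  rcases le_or_gt 0 m with h | h
  · exact mul_nonneg h (by omega)
  · have h2 : 0 ≤ (-m) * (-(m + 1)) := mul_nonneg (by omega) (by omega)
    nlinarith

lemma all_mem {n : ℕ} {s : Finset (Fin n)} {f : Fin n → ℤ} {p : ℤ}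
    (h : ∑ i ∈ s, (f i + p) * (f i + p - 1) = 0) :
    ∀ i ∈ s, f i = -p ∨ f i = 1 - p := by
  intro i hi
  have hnn : ∀ j ∈ s, 0 ≤ (f j + p) * (f j + p - 1) := by
    intro j _
    have := consec_nonneg (f j + p - 1)
    nlinarith
  have := (Finset.sum_eq_zero_iff_of_nonneg hnn).1 h i hi
  rcases mul_eq_zero.1 this with h' | h' <;> omega

lemma exists_val {n : ℕ} {s : Finset (Fin n)} {f : Fin n → ℤ} {u v : ℤ}
    (hall : ∀ i ∈ s, f i = u ∨ f i = v)
    (hne : ∑ i ∈ s, f i ≠ (s.card : ℤ) * v) :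
    ∃ i ∈ s, f i = u := by
  by_contra h
  push_neg at h
  have hv : ∀ i ∈ s, f i = v := fun i hi => (hall i hi).resolve_left (h i hi)
  exact hne (by rw [Finset.sum_congr rfl hv, Finset.sum_const, nsmul_eq_mul])

/-- `ℓ_0 - ℓ_1` is a conic bundle class, and for any conic bundle class `x`
there is a conic bundle class `y` with `(x,y) = 1`. -/
theorem conic_classes (r : ℕ) (h4 : 4 ≤ r) (h7 : r ≤ 7) :
    ConicClass r (fun i => if (i : ℕ) = 0 then 1 else if (i : ℕ) = 1 then -1 else 0) ∧
    ∀ x, ConicClass r x → ∃ y, ConicClass r y ∧ Nform r x y = 1 := by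
  have hr1 : 1 < r + 1 := by omega
  set i1 : Fin (r + 1) := ⟨1, hr1⟩ with hi1def
  have hi1 : i1 ≠ 0 := by simp [hi1def, Fin.ext_iff]
  constructor
  · -- first part
    have hc : (fun i : Fin (r + 1) => if (i : ℕ) = 0 then (1 : ℤ) else if (i : ℕ) = 1 then -1 else 0)
        = fun k => sgl (0 : Fin (r + 1)) (1 : ℤ) k - sgl i1 (1 : ℤ) k := by
      funext k
      simp only [sgl]
      by_cases hk0 : k = 0
      · subst hk0; simp [Fin.ext_iff, hi1def]
      · by_cases hk1 : k = i1
        · subst hk1; simp [Fin.ext_iff, hi1def, Ne.symm hi1]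
        · have h0 : (k : ℕ) ≠ 0 := fun h => hk0 (Fin.ext (by simp [h]))
          have h1 : (k : ℕ) ≠ 1 := fun h => hk1 (Fin.ext (by simp [h, hi1def]))
          simp [h0, h1, hk0, hk1]
    rw [hc]
    have hform : ∀ z : Fin (r + 1) → ℤ,
        Nform r z (fun k => sgl (0 : Fin (r + 1)) (1 : ℤ) k - sgl i1 (1 : ℤ) k)
          = z 0 + z i1 := by
      intro z
      have := Nform_sub_right r z (sgl (0 : Fin (r + 1)) 1) (sgl i1 1)
      rw [this, Nform_single_right, Nform_single_right, if_pos rfl, if_neg hi1]; ring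
    constructor
    · rw [hform]
      simp [sgl_same, sgl_ne hi1, sgl_ne (Ne.symm hi1)]
    · rw [Nform_comm, hform (Kvec r)]
      simp [Kvec, if_neg hi1]
  · -- second part
    intro x hx
    obtain ⟨hxx, hxK⟩ := hx
    set s : Finset (Fin (r + 1)) := Finset.univ.erase 0 with hs
    have hmem : ∀ i : Fin (r + 1), i ∈ s ↔ i ≠ 0 := by
      intro i; simp [hs]
    have hcard : (s.card : ℤ) = (r : ℤ) := by
      have : s.card = r := by
        rw [hs, Finset.card_erase_of_mem (Finset.mem_univ _)]
        simp
      rw [this]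
    have hexp : ∀ y : Fin (r + 1) → ℤ,
        Nform r x y = x 0 * y 0 - ∑ i ∈ s, x i * y i := by
      intro y
      unfold Nform
      rw [← Finset.sum_erase_add _ _ (Finset.mem_univ (0 : Fin (r + 1))), if_pos rfl]
      have h1 : ∑ i ∈ Finset.univ.erase (0 : Fin (r + 1)),
          (if i = 0 then x i * y i else -(x i * y i)) = ∑ i ∈ s, -(x i * y i) := by
        refine Finset.sum_congr rfl fun i hi => ?_
        rw [if_neg ((hmem i).1 hi)]
      rw [h1, Finset.sum_neg_distrib]
      ring
    have hS2 : ∑ i ∈ s, x i * x i = x 0 * x 0 := by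
      have h := hexp x
      rw [hxx] at h
      linarith
    have hS1 : ∑ i ∈ s, x i = 2 - 3 * x 0 := by
      have h := hexp (Kvec r)
      rw [hxK] at h
      have hK0 : Kvec r 0 = -3 := by simp [Kvec]
      have h2 : ∑ i ∈ s, x i * Kvec r i = ∑ i ∈ s, x i := by
        refine Finset.sum_congr rfl fun i hi => ?_
        have : Kvec r i = 1 := by simp [Kvec, (hmem i).1 hi]
        rw [this, mul_one]
      rw [hK0, h2] at h
      linarith
    -- Cauchy–Schwarz bound
    have hsq : ∑ i ∈ s, x i ^ 2 = ∑ i ∈ s, x i * x i :=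
      Finset.sum_congr rfl fun i _ => sq (x i)
    have hCS : (2 - 3 * x 0) ^ 2 ≤ (r : ℤ) * (x 0 * x 0) := by
      have h := sq_sum_le_card_mul_sum_sq (s := s) (f := x)
      rw [hsq, hS1, hS2, hcard] at h
      exact h
    have hr7 : (r : ℤ) ≤ 7 := by exact_mod_cast h7
    have hr4 : (4 : ℤ) ≤ (r : ℤ) := by exact_mod_cast h4
    have ha1 : 1 ≤ x 0 := by nlinarith
    have ha5 : x 0 ≤ 5 := by nlinarith
    -- helper: turns "exists value u and value u+1" into conclusion
    have pair : ∀ u v : ℤ, v = u + 1 → (∃ i ∈ s, x i = v) → (∃ j ∈ s, x j = u) →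
        ∃ y, ConicClass r y ∧ Nform r x y = 1 := by
      rintro u v huv ⟨i, hi, hiv⟩ ⟨j, hj, hjv⟩
      refine root1_case r x ⟨hxx, hxK⟩ i j ((hmem i).1 hi) ((hmem j).1 hj) ?_ (by omega)
      intro h; rw [h, hjv] at hiv; omega
    have hval : x 0 = 1 ∨ x 0 = 2 ∨ x 0 = 3 ∨ x 0 = 4 ∨ x 0 = 5 := by omega
    rcases hval with ha | ha | ha | ha | ha
    · -- a = 1 : entries in {-1,0}, sum -1
      have hzero : ∑ i ∈ s, (x i + 1) * (x i + 1 - 1) = 0 := by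
        have := sum_quad s x 1 0
        rw [hS2, hS1, ha] at this
        have h0 : ∀ i ∈ s, (x i + 1) * (x i + 1 - 1) = (x i + 1) * (x i + 0) :=
          fun i _ => by ring
        rw [Finset.sum_congr rfl h0, this]; ring
      have hall := all_mem hzero
      refine pair (-1) 0 (by norm_num) ?_ ?_
      · -- exists 0
        refine exists_val (u := 0) (v := -1) (fun i hi => (hall i hi).symm.imp (fun h => by omega) id) ?_
        rw [hS1, ha, hcard]; omega
      · refine exists_val (fun i hi => hall i hi) ?_
        rw [hS1, ha, hcard]; omega
    · -- a = 2 : entries in {-1,0}, sum -4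
      have hzero : ∑ i ∈ s, (x i + 1) * (x i + 1 - 1) = 0 := by
        have := sum_quad s x 1 0
        rw [hS2, hS1, ha] at this
        have h0 : ∀ i ∈ s, (x i + 1) * (x i + 1 - 1) = (x i + 1) * (x i + 0) :=
          fun i _ => by ring
        rw [Finset.sum_congr rfl h0, this]; ring
      have hall := all_mem hzero
      by_cases hallm1 : ∀ i ∈ s, x i = -1
      · -- all entries are -1 : use the root ℓ0 - ℓi - ℓj - ℓk
        have hr2 : 2 < r + 1 := by omega
        have hr3 : 3 < r + 1 := by omega
        set i2 : Fin (r + 1) := ⟨2, hr2⟩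
        set i3 : Fin (r + 1) := ⟨3, hr3⟩
        refine root2_case r x ⟨hxx, hxK⟩ i1 i2 i3 ?_ ?_ ?_ ?_ ?_ ?_ ?_
        · exact hi1
        · exact Fin.ne_of_val_ne (by show (2:ℕ) ≠ ((0 : Fin (r+1)) : ℕ); simp)
        · exact Fin.ne_of_val_ne (by show (3:ℕ) ≠ ((0 : Fin (r+1)) : ℕ); simp)
        · exact Fin.ne_of_val_ne (by show (1:ℕ) ≠ 2; omega)
        · exact Fin.ne_of_val_ne (by show (1:ℕ) ≠ 3; omega)
        · exact Fin.ne_of_val_ne (by show (2:ℕ) ≠ 3; omega)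
        · have h1 := hallm1 i1 ((hmem i1).2 hi1)
          have h2 := hallm1 i2 ((hmem i2).2 (Fin.ne_of_val_ne (by show (2:ℕ) ≠ ((0 : Fin (r+1)) : ℕ); simp)))
          have h3 := hallm1 i3 ((hmem i3).2 (Fin.ne_of_val_ne (by show (3:ℕ) ≠ ((0 : Fin (r+1)) : ℕ); simp)))
          rw [ha, h1, h2, h3]; ring
      · -- some entry is 0, and some entry is -1
        push_neg at hallm1
        obtain ⟨i0, hi0, hi0v⟩ := hallm1
        have hi00 : x i0 = 0 := by rcases hall i0 hi0 with h | h <;> omega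
        refine pair (-1) 0 (by norm_num) ⟨i0, hi0, by omega⟩ ?_
        refine exists_val (fun i hi => hall i hi) ?_
        rw [hS1, ha, hcard]; omega
    · -- a = 3 : r ≥ 6; entries in [-3,0]; exists -2 and exists -1
      have hr6 : (6 : ℤ) ≤ (r : ℤ) := by nlinarith
      have hQ : ∑ i ∈ s, (x i + 1) * (x i + 2) = 2 * (r : ℤ) - 12 := by
        rw [sum_quad s x 1 2, hS2, hS1, ha, hcard]; ring
      have hQnn : ∀ i ∈ s, 0 ≤ (x i + 1) * (x i + 2) := by
        intro i _
        have := consec_nonneg (x i + 1); nlinarith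
      have hrange : ∀ i ∈ s, -3 ≤ x i ∧ x i ≤ 0 := by
        intro i hi
        have hle : (x i + 1) * (x i + 2) ≤ 2 * (r : ℤ) - 12 := by
          rw [← hQ]
          exact Finset.single_le_sum hQnn hi
        have hle2 : (x i + 1) * (x i + 2) ≤ 2 := by nlinarith
        constructor <;> nlinarith
      have hex2 : ∃ i ∈ s, x i = -2 := by
        by_contra h
        push_neg at h
        have hdvd : (3 : ℤ) ∣ ∑ i ∈ s, (x i + 1) * (x i + 3) := by
          refine Finset.dvd_sum fun i hi => ?_
          have hr := hrange i hi
          have hne := h i hi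
          have : x i = -3 ∨ x i = -1 ∨ x i = 0 := by omega
          rcases this with h' | h' | h' <;> rw [h'] <;> norm_num
        rw [sum_quad s x 1 3, hS2, hS1, ha, hcard] at hdvd
        have : (3 : ℤ) ∣ 3 * (r : ℤ) - 19 := by
          convert hdvd using 1; ring
        omega
      have hex1 : ∃ i ∈ s, x i = -1 := by
        by_contra h
        push_neg at h
        have hdvd : (6 : ℤ) ∣ ∑ i ∈ s, (x i + 2) * (x i + 3) := by
          refine Finset.dvd_sum fun i hi => ?_
          have hr := hrange i hi
          have hne := h i hi
          have : x i = -3 ∨ x i = -2 ∨ x i = 0 := by omega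
          rcases this with h' | h' | h' <;> rw [h'] <;> norm_num
        rw [sum_quad s x 2 3, hS2, hS1, ha, hcard] at hdvd
        have : (6 : ℤ) ∣ 6 * (r : ℤ) - 26 := by
          convert hdvd using 1; ring
        omega
      exact pair (-2) (-1) (by norm_num) hex1 hex2
    · -- a = 4 : r = 7; entries in {-2,-1}
      have hr7' : (r : ℤ) = 7 := by nlinarith
      have hzero : ∑ i ∈ s, (x i + 2) * (x i + 2 - 1) = 0 := by
        have := sum_quad s x 2 1
        rw [hS2, hS1, ha, hcard, hr7'] at this
        have h0 : ∀ i ∈ s, (x i + 2) * (x i + 2 - 1) = (x i + 2) * (x i + 1) :=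
          fun i _ => by ring
        rw [Finset.sum_congr rfl h0, this]; ring
      have hall := all_mem hzero
      refine pair (-2) (-1) (by norm_num) ?_ ?_
      · refine exists_val (u := -1) (v := -2)
          (fun i hi => ((hall i hi).imp (fun h => by omega) (fun h => by omega)).symm) ?_
        rw [hS1, ha, hcard, hr7']; omega
      · refine exists_val (u := -2) (v := -1)
          (fun i hi => (hall i hi).imp (fun h => by omega) (fun h => by omega)) ?_
        rw [hS1, ha, hcard, hr7']; omega
    · -- a = 5 : r = 7; entries in {-2,-1}
      have hr7' : (r : ℤ) = 7 := by nlinarith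
      have hzero : ∑ i ∈ s, (x i + 2) * (x i + 2 - 1) = 0 := by
        have := sum_quad s x 2 1
        rw [hS2, hS1, ha, hcard, hr7'] at this
        have h0 : ∀ i ∈ s, (x i + 2) * (x i + 2 - 1) = (x i + 2) * (x i + 1) :=
          fun i _ => by ring
        rw [Finset.sum_congr rfl h0, this]; ring
      have hall := all_mem hzero
      refine pair (-2) (-1) (by norm_num) ?_ ?_
      · refine exists_val (u := -1) (v := -2)
          (fun i hi => ((hall i hi).imp (fun h => by omega) (fun h => by omega)).symm) ?_
        rw [hS1, ha, hcard, hr7']; omega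
      · refine exists_val (u := -2) (v := -1)
          (fun i hi => (hall i hi).imp (fun h => by omega) (fun h => by omega)) ?_
        rw [hS1, ha, hcard, hr7']; omega
end
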